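/- arXiv:2004.13586 — 2 statements merged into one kernel-verified Lean document; each statement's English description precedes it below -/
import Mathlib

section
/- Let n be a Fock occupation vector whose shift orbit has cardinality d (so d | M), and let m be a multiple of M/d. Then the vector |E_{n,m}(Λ_j)⟩ = (1/√d) Σ_{k=0}^{d−1} ω^{−(½(M−1)j|n| + m)k} Λ_j^k |n⟩ is a unit eigenvector of Λ_j with eigenvalue ω^{½(M−1)j|n| + m}. -/
open Finset

noncomputable section

/-- Total photon number `|n|`. -/
def totalPhotons {M : ℕ} (n : Fin M → ℕ) : ℕ := ∑ m : Fin M, n m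

/-- Clock label `μ(n) = Σ m·n(m)`. -/
def clockLabel {M : ℕ} (n : Fin M → ℕ) : ℕ := ∑ m : Fin M, (m : ℕ) * n m

/-- `ω = exp(2πi/M)`. -/
def omegaM (M : ℕ) : ℂ := Complex.exp (2 * Real.pi * Complex.I / M)

/-- The Fock space over `M` modes: amplitudes on occupation vectors. -/
abbrev Fock (M : ℕ) := (Fin M → ℕ) → ℂ

/-- Mode-shift operator: `X |n⟩ = |X·n⟩` with `(X·n)(m) = n(m−1)` mod `M`. -/
def fockX {M : ℕ} [NeZero M] (f : Fock M) : Fock M := fun v => f (fun m => v (m + 1))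

/-- Phase-shift operator: `Z |n⟩ = ω^{μ(n)} |n⟩`. -/
def fockZ {M : ℕ} (f : Fock M) : Fock M := fun v => omegaM M ^ clockLabel v * f v

/-- Fock basis state `|n⟩`. -/
def fockDelta {M : ℕ} (n : Fin M → ℕ) : Fock M := fun v => if v = n then 1 else 0

/-- Cyclic mode shift on occupation vectors: `(X·n)(m) = n(m-1)` mod `M`. -/
def modeShift {M : ℕ} [NeZero M] (n : Fin M → ℕ) : Fin M → ℕ := fun m => n (m - 1)

/-- `ω^{1/2} = exp(πi/M)`. -/
def omegaHalf (M : ℕ) : ℂ := Complex.exp (Real.pi * Complex.I / M)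

/-- Generalized Pauli operator `Λ_j = X Z^j`. -/
def fockLambda {M : ℕ} [NeZero M] (j : ℤ) (f : Fock M) : Fock M :=
  fockX (fun v => omegaM M ^ (j * (clockLabel v : ℤ)) * f v)

open Fin.NatCast

lemma omegaM_ne_zero (M : ℕ) : omegaM M ≠ 0 := Complex.exp_ne_zero _
lemma omegaHalf_ne_zero (M : ℕ) : omegaHalf M ≠ 0 := Complex.exp_ne_zero _

lemma modeShift_iterate {M : ℕ} [NeZero M] (n : Fin M → ℕ) (i : ℕ) :
    modeShift^[i] n = fun m => n (m - (i : Fin M)) := by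
  induction i with
  | zero => simp
  | succ i ih =>
    rw [Function.iterate_succ_apply', ih]
    funext m
    show n (m - 1 - (i : Fin M)) = n (m - ((i+1 : ℕ) : Fin M))
    congr 1
    push_cast
    abel

lemma modeShift_injective {M : ℕ} [NeZero M] : Function.Injective (modeShift (M := M)) := by
  intro u v h
  funext m
  have := congrFun h (m + 1)
  simpa [modeShift] using this

lemma orbit_inj {M : ℕ} [NeZero M] (n : Fin M → ℕ) (d : ℕ)
    (hmin : ∀ k, 0 < k → k < d → modeShift^[k] n ≠ n)
    (k l : ℕ) (hk : k < d) (hl : l < d)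
    (h : modeShift^[k] n = modeShift^[l] n) : k = l := by
  have key : ∀ a b : ℕ, a ≤ b → b < d → modeShift^[a] n = modeShift^[b] n → b ≤ a := by
    intro a b hab hbd hEq
    have : modeShift^[a] (modeShift^[b-a] n) = modeShift^[a] n := by
      rw [← Function.iterate_add_apply, Nat.add_sub_cancel' hab, hEq]
    have h2 : modeShift^[b-a] n = n := (modeShift_injective.iterate a) this
    rcases Nat.eq_zero_or_pos (b - a) with h0 | h0
    · omega
    · exact absurd h2 (hmin _ h0 (by omega))
  rcases le_total k l with hkl | hkl
  · exact le_antisymm hkl (key k l hkl hl h)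
  · exact (le_antisymm hkl (key l k hkl hk h.symm)).symm

lemma sum_clock {M : ℕ} [NeZero M] (n : Fin M → ℕ) :
    2 * ∑ i ∈ Finset.range M, clockLabel (modeShift^[i] n)
      = totalPhotons n * (M * (M - 1)) := by
  have step1 : ∀ i : ℕ, clockLabel (modeShift^[i] n)
      = ∑ m : Fin M, ((m + (i : Fin M) : Fin M) : ℕ) * n m := by
    intro i
    rw [modeShift_iterate, clockLabel]
    exact (Fintype.sum_bijective (Equiv.addRight (i : Fin M)) (Equiv.bijective _)
      (fun m => ((m + (i : Fin M) : Fin M) : ℕ) * n m)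
      (fun m => (m : ℕ) * n (m - (i : Fin M))) (fun m => by simp)).symm
  calc 2 * ∑ i ∈ Finset.range M, clockLabel (modeShift^[i] n)
      = 2 * ∑ i ∈ Finset.range M, ∑ m : Fin M, ((m + (i : Fin M) : Fin M) : ℕ) * n m := by
        rw [Finset.sum_congr rfl (fun i _ => step1 i)]
    _ = ∑ m : Fin M, (2 * ∑ i ∈ Finset.range M, ((m + (i : Fin M) : Fin M) : ℕ)) * n m := by
        simp only [Finset.mul_sum]
        rw [Finset.sum_comm]
        refine Finset.sum_congr rfl fun m _ => ?_
        rw [Finset.sum_mul]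
        refine Finset.sum_congr rfl fun i _ => by ring
    _ = ∑ m : Fin M, (M * (M-1)) * n m := by
        refine Finset.sum_congr rfl fun m _ => ?_
        congr 1
        have h1 : ∑ i ∈ Finset.range M, ((m + ((i : ℕ) : Fin M) : Fin M) : ℕ)
            = ∑ i : Fin M, ((m + i : Fin M) : ℕ) := by
          rw [← Fin.sum_univ_eq_sum_range (fun i => ((m + ((i:ℕ) : Fin M) : Fin M) : ℕ)) M]
          exact Finset.sum_congr rfl fun i _ => by rw [Fin.cast_val_eq_self]
        rw [h1]
        have h2 : ∑ i : Fin M, ((m + i : Fin M) : ℕ) = ∑ i : Fin M, (i : ℕ) :=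
          Fintype.sum_equiv (Equiv.addLeft m) _ _ (fun i => rfl)
        rw [h2, Fin.sum_univ_eq_sum_range (fun i => i) M]
        have := Finset.sum_range_id_mul_two M
        omega
    _ = totalPhotons n * (M * (M-1)) := by
        rw [totalPhotons, Finset.sum_mul]
        exact Finset.sum_congr rfl fun m _ => by ring

lemma sum_clock_period {M : ℕ} [NeZero M] (n : Fin M → ℕ) (d q : ℕ)
    (hfix : modeShift^[d] n = n) :
    ∑ i ∈ Finset.range (q * d), clockLabel (modeShift^[i] n)
      = q * ∑ i ∈ Finset.range d, clockLabel (modeShift^[i] n) := by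
  induction q with
  | zero => simp
  | succ q ih =>
    have h0 : (q + 1) * d = q * d + d := by ring
    rw [h0, Finset.sum_range_add, ih]
    have h1 : ∀ i : ℕ, modeShift^[q * d + i] n = modeShift^[i] n := by
      intro i
      rw [add_comm, Function.iterate_add_apply, mul_comm, Function.iterate_mul,
        Function.iterate_fixed hfix]
    have h2 : ∑ i ∈ Finset.range d, clockLabel (modeShift^[q*d+i] n)
        = ∑ i ∈ Finset.range d, clockLabel (modeShift^[i] n) :=
      Finset.sum_congr rfl fun i _ => by rw [h1 i]
    rw [h2]
    ring

lemma shift_eq_iff {M : ℕ} [NeZero M] (v w : Fin M → ℕ) :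
    (fun m => v (m + 1)) = w ↔ v = modeShift w := by
  constructor
  · intro h
    funext m
    have := congrFun h (m - 1)
    simp only [sub_add_cancel] at this
    rw [this]; rfl
  · intro h
    funext m
    rw [h]
    show w (m + 1 - 1) = w m
    rw [add_sub_cancel_right]

lemma lambda_iter {M : ℕ} [NeZero M] (j : ℤ) (n : Fin M → ℕ) (k : ℕ) :
    (fockLambda j)^[k] (fockDelta n)
      = fun v => omegaM M ^ (j * (∑ i ∈ Finset.range k, (clockLabel (modeShift^[i] n) : ℤ)))
          * fockDelta (modeShift^[k] n) v := by
  induction k with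
  | zero => funext v; simp [fockDelta]; rfl
  | succ k ih =>
    rw [Function.iterate_succ_apply', ih]
    funext v
    show omegaM M ^ (j * (clockLabel (fun m => v (m + 1)) : ℤ))
        * (omegaM M ^ (j * _) * fockDelta (modeShift^[k] n) (fun m => v (m + 1))) = _
    rcases eq_or_ne v (modeShift^[k+1] n) with hv | hv
    · have hv' : v = modeShift (modeShift^[k] n) := by
        rwa [Function.iterate_succ_apply'] at hv
      have h1 : (fun m => v (m + 1)) = modeShift^[k] n := by
        rw [shift_eq_iff]; exact hv'
      rw [h1, fockDelta, fockDelta, if_pos rfl, if_pos hv, Finset.sum_range_succ]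
      rw [mul_one, mul_one, ← zpow_add₀ (omegaM_ne_zero M)]
      congr 1
      ring
    · have hv' : v ≠ modeShift (modeShift^[k] n) := by
        rwa [Function.iterate_succ_apply'] at hv
      have h1 : (fun m => v (m + 1)) ≠ modeShift^[k] n := by
        rw [Ne, shift_eq_iff]; exact hv'
      rw [fockDelta, fockDelta, if_neg h1, if_neg hv]
      ring

/-- for `n` with shift orbit of cardinality `d` (so `d ∣ M`) and `m` a
multiple of `M/d`, the vector
`|E_{n,m}(Λ_j)⟩ = (1/√d) Σ_{k<d} ω^{−(½(M−1)j|n|+m)k} Λ_j^k |n⟩`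
(written with `ω^{1/2} = exp(πi/M)` and exponent `e = (M−1)j|n| + 2m`)
is a unit eigenvector of `Λ_j` with eigenvalue `ω^{½(M−1)j|n|+m} = (ω^{1/2})^e`. -/
theorem pauli_eigenvector (M : ℕ) [NeZero M] (j : ℤ) (n : Fin M → ℕ) (d : ℕ)
    (hd : 0 < d) (hfix : modeShift^[d] n = n)
    (hmin : ∀ k, 0 < k → k < d → modeShift^[k] n ≠ n)
    (hdM : d ∣ M) (m : ℕ) (hm : (M / d) ∣ m) :
    let e : ℤ := ((M : ℤ) - 1) * j * (totalPhotons n : ℤ) + 2 * (m : ℤ)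
    let E : Fock M := fun v => (1 / Real.sqrt d : ℂ) *
      ∑ k ∈ Finset.range d,
        omegaHalf M ^ (-(e * k)) * ((fockLambda j)^[k] (fockDelta n)) v
    fockLambda j E = omegaHalf M ^ e • E ∧
      ∑ k ∈ Finset.range d, ‖E (modeShift^[k] n)‖ ^ 2 = 1 := by
  intro e E
  have hMpos : 0 < M := Nat.pos_of_ne_zero (NeZero.ne M)
  have hMne : (M : ℂ) ≠ 0 := Nat.cast_ne_zero.mpr (NeZero.ne M)
  obtain ⟨q, hq⟩ := hdM
  have hq0 : 0 < q := Nat.pos_of_ne_zero (fun h => by subst h; simp at hq; omega)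
  have hMd : M / d = q := by rw [hq, Nat.mul_div_cancel_left _ hd]
  obtain ⟨m', hm'⟩ := hm
  rw [hMd] at hm'
  have hHne := omegaHalf_ne_zero M
  have hωne := omegaM_ne_zero M
  -- basic facts about omegaHalf
  have hsq : omegaHalf M ^ (2:ℤ) = omegaM M := by
    have h : omegaHalf M ^ (2:ℕ) = omegaM M := by
      rw [omegaHalf, omegaM, ← Complex.exp_nat_mul]
      congr 1
      push_cast
      ring
    rw [← h]
    norm_cast
  have h2M : omegaHalf M ^ (2 * (M:ℤ)) = 1 := by
    rw [omegaHalf, ← Complex.exp_int_mul]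
    rw [show ((2 * (M:ℤ) : ℤ) : ℂ) * (Real.pi * Complex.I / M) = 2 * Real.pi * Complex.I by
      push_cast; field_simp]
    exact Complex.exp_two_pi_mul_I
  -- the clock-label sum identity
  set S : ℕ := ∑ i ∈ Finset.range d, clockLabel (modeShift^[i] n) with hSdef
  have hS : 2 * S = totalPhotons n * (d * (M - 1)) := by
    have hper := sum_clock_period n d q hfix
    rw [show q * d = M by rw [hq]; exact Nat.mul_comm q d] at hper
    have hbig := sum_clock n
    rw [hper] at hbig
    refine Nat.eq_of_mul_eq_mul_left hq0 ?_
    calc q * (2 * S) = 2 * (q * S) := by ring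
      _ = totalPhotons n * (M * (M - 1)) := hbig
      _ = q * (totalPhotons n * (d * (M - 1))) := by
          rw [show M * (M - 1) = q * (d * (M - 1)) by rw [hq]; ring]
          ring
  have hSZ : 2 * (S:ℤ) = (totalPhotons n : ℤ) * ((d:ℤ) * ((M:ℤ) - 1)) := by
    have hM1 : ((M - 1 : ℕ) : ℤ) = (M:ℤ) - 1 := by
      have h1 : 1 ≤ M := hMpos
      push_cast [h1]
      ring
    rw [← hM1]
    exact_mod_cast hS
  -- key exponent identity
  have he : e = ((M : ℤ) - 1) * j * (totalPhotons n : ℤ) + 2 * (m : ℤ) := rfl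
  have hm2 : (m:ℤ) = (q:ℤ) * (m':ℤ) := by exact_mod_cast hm'
  have hM2 : (M:ℤ) = (d:ℤ) * (q:ℤ) := by exact_mod_cast hq
  have hed : e * (d:ℤ) = 2 * (j * (S:ℤ)) + (2 * (M:ℤ)) * (m':ℤ) := by
    rw [he, hm2]
    linear_combination (-j) * hSZ + (-2 * (m':ℤ)) * hM2
  have hkey : omegaHalf M ^ (e * (d:ℤ)) = omegaM M ^ (j * (S:ℤ)) := by
    rw [hed, zpow_add₀ hHne]
    have h1 : omegaHalf M ^ (2 * (j * (S:ℤ))) = omegaM M ^ (j * (S:ℤ)) := by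
      rw [zpow_mul, hsq]
    have h2 : omegaHalf M ^ (2 * (M:ℤ) * (m':ℤ)) = 1 := by
      rw [zpow_mul, h2M, one_zpow]
    rw [h1, h2, mul_one]
  have hSsum : ∀ k : ℕ, (∑ i ∈ Finset.range k, (clockLabel (modeShift^[i] n) : ℤ))
      = ((∑ i ∈ Finset.range k, clockLabel (modeShift^[i] n) : ℕ) : ℤ) := by
    intro k; push_cast; ring
  constructor
  · -- eigenvector equation
    funext v
    have hE : ∀ w, E w = (1 / Real.sqrt d : ℂ) *
        ∑ k ∈ Finset.range d, omegaHalf M ^ (-(e * k)) * ((fockLambda j)^[k] (fockDelta n)) w :=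
      fun w => rfl
    have hgoal : (fockLambda j E) v
        = omegaM M ^ (j * (clockLabel (fun m => v (m + 1)) : ℤ)) * E (fun m => v (m + 1)) := rfl
    have hrhs : (omegaHalf M ^ e • E) v = omegaHalf M ^ e * E v := rfl
    rw [hgoal, hrhs, hE, hE]
    have hstep : ∀ k : ℕ,
        omegaM M ^ (j * (clockLabel (fun m => v (m + 1)) : ℤ))
          * ((fockLambda j)^[k] (fockDelta n)) (fun m => v (m + 1))
        = ((fockLambda j)^[k+1] (fockDelta n)) v := fun k => by
      rw [Function.iterate_succ_apply']
      rfl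
    have hshift : ∀ f : ℕ → ℂ, f d = f 0 →
        ∑ k ∈ Finset.range d, f (k+1) = ∑ k ∈ Finset.range d, f k := by
      intro f hf
      have h1 := Finset.sum_range_succ' f d
      have h2 := Finset.sum_range_succ f d
      rw [hf] at h2
      exact add_right_cancel (h1.symm.trans h2)
    have hfd : (fun k : ℕ => omegaHalf M ^ (-(e * (k:ℤ))) * ((fockLambda j)^[k] (fockDelta n)) v) d
        = (fun k : ℕ => omegaHalf M ^ (-(e * (k:ℤ))) * ((fockLambda j)^[k] (fockDelta n)) v) 0 := by
      simp only [lambda_iter, hfix]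
      rw [hSsum d]
      simp only [Nat.cast_zero, mul_zero, neg_zero, zpow_zero, Finset.range_zero,
        Finset.sum_empty, one_mul]
      rw [← mul_assoc, ← hkey, ← zpow_add₀ hHne]
      simp
    have hsum1 : omegaM M ^ (j * (clockLabel (fun m => v (m + 1)) : ℤ)) *
        ∑ k ∈ Finset.range d,
          omegaHalf M ^ (-(e * k)) * ((fockLambda j)^[k] (fockDelta n)) (fun m => v (m+1))
        = ∑ k ∈ Finset.range d,
            omegaHalf M ^ (-(e * k)) * ((fockLambda j)^[k+1] (fockDelta n)) v := by
      rw [Finset.mul_sum]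
      refine Finset.sum_congr rfl fun k _ => ?_
      rw [← hstep k]
      ring
    have hsum2 : ∑ k ∈ Finset.range d,
          omegaHalf M ^ (-(e * k)) * ((fockLambda j)^[k+1] (fockDelta n)) v
        = omegaHalf M ^ e * ∑ k ∈ Finset.range d,
            (fun k : ℕ => omegaHalf M ^ (-(e * (k:ℤ))) * ((fockLambda j)^[k] (fockDelta n)) v)
              (k+1) := by
      rw [Finset.mul_sum]
      refine Finset.sum_congr rfl fun k _ => ?_
      simp only []
      rw [← mul_assoc, ← zpow_add₀ hHne]
      congr 2
      push_cast
      ring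
    have hAB : omegaM M ^ (j * (clockLabel (fun m => v (m + 1)) : ℤ)) *
        ∑ k ∈ Finset.range d,
          omegaHalf M ^ (-(e * k)) * ((fockLambda j)^[k] (fockDelta n)) (fun m => v (m+1))
        = omegaHalf M ^ e * ∑ k ∈ Finset.range d,
            omegaHalf M ^ (-(e * k)) * ((fockLambda j)^[k] (fockDelta n)) v := by
      have hsh := hshift
        (fun k : ℕ => omegaHalf M ^ (-(e * (k:ℤ))) * ((fockLambda j)^[k] (fockDelta n)) v) hfd
      rw [hsum1, hsum2, hsh]
    rw [mul_left_comm, hAB, mul_left_comm]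
  · -- normalization
    have hval : ∀ k ∈ Finset.range d, E (modeShift^[k] n)
        = (1 / Real.sqrt d : ℂ) * (omegaHalf M ^ (-(e * k)) *
            omegaM M ^ (j * (∑ i ∈ Finset.range k, (clockLabel (modeShift^[i] n) : ℤ)))) := by
      intro k hk
      have hkd := Finset.mem_range.mp hk
      have hE : E (modeShift^[k] n) = (1 / Real.sqrt d : ℂ) *
          ∑ l ∈ Finset.range d, omegaHalf M ^ (-(e * l)) *
            ((fockLambda j)^[l] (fockDelta n)) (modeShift^[k] n) := rfl
      rw [hE]
      congr 1
      have h0 : ∀ l ∈ Finset.range d, l ≠ k →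
          omegaHalf M ^ (-(e * l)) * ((fockLambda j)^[l] (fockDelta n)) (modeShift^[k] n)
            = 0 := by
        intro l hl hlk
        have hne : modeShift^[k] n ≠ modeShift^[l] n := fun hEq =>
          hlk (orbit_inj n d hmin l k (Finset.mem_range.mp hl) hkd hEq.symm)
        simp [lambda_iter, fockDelta, hne]
      have h1 : k ∉ Finset.range d →
          omegaHalf M ^ (-(e * k)) * ((fockLambda j)^[k] (fockDelta n)) (modeShift^[k] n)
            = 0 := fun hk' => absurd hk hk'
      rw [Finset.sum_eq_single k h0 h1]
      simp [lambda_iter, fockDelta]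
    have habsH : ‖omegaHalf M‖ = 1 := by
      rw [omegaHalf, show ((Real.pi:ℂ) * Complex.I / M) = ((Real.pi / M : ℝ):ℂ) * Complex.I by
        push_cast; ring]
      exact Complex.norm_exp_ofReal_mul_I _
    have habsW : ‖omegaM M‖ = 1 := by
      rw [omegaM, show ((2:ℂ) * Real.pi * Complex.I / M) = ((2 * Real.pi / M : ℝ):ℂ) * Complex.I by
        push_cast; ring]
      exact Complex.norm_exp_ofReal_mul_I _
    have hd0 : (0:ℝ) < (d:ℝ) := by exact_mod_cast hd
    have habs : ∀ k ∈ Finset.range d, ‖E (modeShift^[k] n)‖ ^ 2 = 1 / (d:ℝ) := by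
      intro k hk
      rw [hval k hk]
      rw [norm_mul, norm_mul, norm_zpow, norm_zpow, habsH, habsW, one_zpow, one_zpow,
        mul_one, mul_one]
      rw [norm_div, norm_one, Complex.norm_real, Real.norm_eq_abs, abs_of_nonneg (Real.sqrt_nonneg _)]
      rw [div_pow, one_pow, Real.sq_sqrt (le_of_lt hd0)]
    rw [Finset.sum_congr rfl habs, Finset.sum_const, Finset.card_range, nsmul_eq_mul]
    rw [mul_one_div, div_self (ne_of_gt hd0)]
end
end

section
/- Let n have shift orbit of cardinality d, and let j, l ∈ ℤ. The eigenbases of Λ_j and Λ_l restricted to the Pauli subspace span(E_n) are mutually unbiased (all pairwise overlaps have modulus 1/√d) if and only if gcd((l−j)·|n|·d/M, d) = 1. -/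
open Finset

noncomputable section

/-- The `Λ_j` eigenvector `|E_{n,m}(Λ_j)⟩ = (1/√d) Σ_{k<d} ω^{−(½(M−1)j|n|+m)k} Λ_j^k |n⟩`
on the Pauli subspace of `n` (with `ω^{1/2} = exp(πi/M)`). -/
def pauliEigvec {M : ℕ} [NeZero M] (j : ℤ) (n : Fin M → ℕ) (d m : ℕ) : Fock M :=
  fun v => (1 / Real.sqrt d : ℂ) *
    ∑ k ∈ Finset.range d,
      omegaHalf M ^ (-((((M : ℤ) - 1) * j * (totalPhotons n : ℤ) + 2 * (m : ℤ)) * k)) *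
        ((fockLambda j)^[k] (fockDelta n)) v

/-- Inner product of two amplitude functions supported on the Pauli subspace
`span{X^k|n⟩ : k < d}`. -/
def orbitInner {M : ℕ} [NeZero M] (n : Fin M → ℕ) (d : ℕ) (f g : Fock M) : ℂ :=
  ∑ k ∈ Finset.range d,
    (starRingEnd ℂ) (f (modeShift^[k] n)) * g (modeShift^[k] n)


open Complex
set_option linter.unusedSectionVars false
set_option linter.unusedTactic false






/-- `ew M z = exp(π i z / M)`. -/
def ew (M : ℕ) (z : ℤ) : ℂ := Complex.exp (Real.pi * Complex.I * z / M)

lemma ew_eq (M : ℕ) (z : ℤ) : ew M z = Complex.exp (((Real.pi * z / M : ℝ) : ℂ) * Complex.I) := by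
  unfold ew; push_cast; ring_nf

lemma ew_abs (M : ℕ) (z : ℤ) : ‖ew M z‖ = 1 := by
  rw [ew_eq]; exact Complex.norm_exp_ofReal_mul_I _

lemma ew_ne_zero (M : ℕ) (z : ℤ) : ew M z ≠ 0 := Complex.exp_ne_zero _

lemma ew_add (M : ℕ) (x y : ℤ) : ew M (x + y) = ew M x * ew M y := by
  unfold ew; rw [← Complex.exp_add]; congr 1; push_cast; ring

lemma ew_zero (M : ℕ) : ew M 0 = 1 := by unfold ew; simp

lemma ew_conj (M : ℕ) (z : ℤ) : (starRingEnd ℂ) (ew M z) = ew M (-z) := by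
  unfold ew
  rw [← Complex.exp_conj]
  congr 1
  simp [map_div₀, Complex.conj_I]

lemma ew_pow (M : ℕ) (z : ℤ) (k : ℕ) : ew M z ^ k = ew M (z * k) := by
  unfold ew
  rw [← Complex.exp_nat_mul]
  congr 1; push_cast; ring

lemma ew_eq_one_iff (M : ℕ) (hM : M ≠ 0) (z : ℤ) : ew M z = 1 ↔ (2 * (M : ℤ)) ∣ z := by
  unfold ew
  rw [Complex.exp_eq_one_iff]
  have hπ : (Real.pi : ℂ) ≠ 0 := by
    exact_mod_cast Real.pi_ne_zero
  have hMc : (M : ℂ) ≠ 0 := by exact_mod_cast hM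
  constructor
  · rintro ⟨k, hk⟩
    refine ⟨k, ?_⟩
    have : (z : ℂ) = 2 * M * k := by
      field_simp at hk
      have := hk
      -- π * I * z = k * (2 * π * I) * M
      have h2 : (Real.pi : ℂ) * Complex.I * z = (Real.pi : ℂ) * Complex.I * (2 * M * k) := by
        rw [this]; ring
      exact mul_left_cancel₀ (mul_ne_zero hπ Complex.I_ne_zero) h2
    exact_mod_cast this
  · rintro ⟨k, hk⟩
    refine ⟨k, ?_⟩
    rw [hk]
    push_cast
    field_simp

lemma ew_congr (M : ℕ) {x y : ℤ} (h : x ≡ y [ZMOD (2 * (M : ℤ))]) (hM : M ≠ 0) :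
    ew M x = ew M y := by
  obtain ⟨c, hc⟩ := Int.ModEq.dvd h.symm
  have : x = y + 2 * M * c := by linarith
  rw [this, ew_add, (ew_eq_one_iff M hM _).2 ⟨c, rfl⟩, mul_one]

lemma ew_geom (M : ℕ) (hM : M ≠ 0) (d : ℕ) (c : ℤ) (hcd : (2 * (M : ℤ)) ∣ c * d) :
    ∑ r ∈ range d, ew M (c * r) = if (2 * (M : ℤ)) ∣ c then (d : ℂ) else 0 := by
  have hrw : ∀ r : ℕ, ew M (c * r) = ew M c ^ r := fun r => (ew_pow M c r).symm ▸ rfl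
  simp_rw [hrw]
  split_ifs with h
  · rw [(ew_eq_one_iff M hM c).2 h]; simp
  · have hne : ew M c ≠ 1 := fun hh => h ((ew_eq_one_iff M hM c).1 hh)
    rw [geom_sum_eq hne]
    rw [ew_pow, (ew_eq_one_iff M hM _).2 hcd]
    simp

section FockLemmas

variable {M : ℕ} [NeZero M]

/-- Inverse shift on occupation vectors. -/
def sigv (v : Fin M → ℕ) : Fin M → ℕ := fun m => v (m + 1)

lemma sigv_modeShift (x : Fin M → ℕ) : sigv (modeShift x) = x := by
  funext m; simp [sigv, modeShift]

lemma modeShift_sigv (v : Fin M → ℕ) : modeShift (sigv v) = v := by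
  funext m; simp [sigv, modeShift]

lemma modeShift_inj : Function.Injective (modeShift (M := M)) :=
  Function.LeftInverse.injective sigv_modeShift

lemma totalPhotons_modeShift (x : Fin M → ℕ) :
    totalPhotons (modeShift x) = totalPhotons x := by
  unfold totalPhotons modeShift
  exact Fintype.sum_equiv (Equiv.subRight (1 : Fin M)) _ _ (fun m => rfl)

lemma totalPhotons_iter (x : Fin M → ℕ) (k : ℕ) :
    totalPhotons (modeShift^[k] x) = totalPhotons x := by
  induction k with
  | zero => rfl
  | succ k ih => rw [Function.iterate_succ_apply', totalPhotons_modeShift, ih]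

lemma clock_step (x : Fin M → ℕ) :
    ((clockLabel (modeShift x) : ℤ)) ≡ (clockLabel x : ℤ) + (totalPhotons x : ℤ) [ZMOD (M : ℤ)] := by
  have key : ((clockLabel (modeShift x) : ℤ) : ZMod M)
      = (((clockLabel x : ℤ) + (totalPhotons x : ℤ) : ℤ) : ZMod M) := by
    push_cast
    unfold clockLabel totalPhotons modeShift
    push_cast
    have h1 : ∑ m : Fin M, ((m : ℕ) : ZMod M) * (x (m - 1) : ZMod M)
        = ∑ m : Fin M, (((m + 1 : Fin M) : ℕ) : ZMod M) * (x m : ZMod M) := by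
      refine Fintype.sum_equiv (Equiv.subRight (1 : Fin M)) _ _ (fun m => ?_)
      simp only [Equiv.subRight_apply, sub_add_cancel]
    rw [h1]
    have h2 : ∀ m : Fin M, (((m + 1 : Fin M) : ℕ) : ZMod M) = ((m : ℕ) : ZMod M) + 1 := by
      intro m
      rw [Fin.val_add, ZMod.natCast_mod]
      push_cast
      rw [Fin.val_one', ZMod.natCast_mod]
      push_cast
      ring
    simp_rw [h2, add_mul, one_mul]
    rw [Finset.sum_add_distrib]
  exact (ZMod.intCast_eq_intCast_iff _ _ _).1 key

lemma clock_iter (x : Fin M → ℕ) (k : ℕ) :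
    (clockLabel (modeShift^[k] x) : ℤ)
      ≡ (clockLabel x : ℤ) + k * (totalPhotons x : ℤ) [ZMOD (M : ℤ)] := by
  induction k with
  | zero => simp
  | succ k ih =>
      rw [Function.iterate_succ_apply']
      have h := clock_step (modeShift^[k] x)
      rw [totalPhotons_iter] at h
      have := h.trans (ih.add_right (totalPhotons x : ℤ))
      refine this.trans ?_
      have : (clockLabel x : ℤ) + ↑k * ↑(totalPhotons x) + ↑(totalPhotons x)
          = ↑(clockLabel x) + ↑(k + 1) * ↑(totalPhotons x) := by push_cast; ring
      rw [this]

/-- Partial clock sums along the orbit. -/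
def Sg (x : Fin M → ℕ) (k : ℕ) : ℤ := ∑ i ∈ range k, (clockLabel (modeShift^[i] x) : ℤ)

lemma Sg_mod (x : Fin M → ℕ) (r : ℕ) :
    2 * Sg x r ≡ 2 * r * (clockLabel x : ℤ)
      + (totalPhotons x : ℤ) * (r * (r - 1)) [ZMOD (2 * (M : ℤ))] := by
  induction r with
  | zero => simp [Sg]
  | succ r ih =>
      have hstep : 2 * (clockLabel (modeShift^[r] x) : ℤ)
          ≡ 2 * ((clockLabel x : ℤ) + r * (totalPhotons x : ℤ)) [ZMOD (2 * (M : ℤ))] :=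
        (clock_iter x r).mul_left' (c := 2)
      have hsum : Sg x (r + 1) = Sg x r + (clockLabel (modeShift^[r] x) : ℤ) := by
        unfold Sg; rw [Finset.sum_range_succ]
      rw [hsum, mul_add]
      refine (ih.add hstep).trans ?_
      have : 2 * ↑r * (clockLabel x : ℤ) + ↑(totalPhotons x) * (↑r * (↑r - 1))
          + 2 * ((clockLabel x : ℤ) + ↑r * ↑(totalPhotons x))
          = 2 * ↑(r + 1) * ↑(clockLabel x) + ↑(totalPhotons x) * (↑(r + 1) * (↑(r + 1) - 1)) := by
        push_cast; ring
      rw [this]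

end FockLemmas

section FockLemmas2

variable {M : ℕ} [NeZero M]

lemma omegaM_zpow (z : ℤ) : omegaM M ^ z = ew M (2 * z) := by
  unfold omegaM ew
  rw [← Complex.exp_int_mul]
  congr 1; push_cast; ring

lemma omegaHalf_zpow (z : ℤ) : omegaHalf M ^ z = ew M z := by
  unfold omegaHalf ew
  rw [← Complex.exp_int_mul]
  congr 1; push_cast; ring

lemma lambda_iter_s10 (j : ℤ) (n : Fin M → ℕ) (k : ℕ) (v : Fin M → ℕ) :
    ((fockLambda j)^[k] (fockDelta n)) v
      = ew M (2 * j * Sg n k) * (if v = modeShift^[k] n then 1 else 0) := by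
  induction k generalizing v with
  | zero => simp [Sg, ew_zero, fockDelta]; congr
  | succ k ih =>
      rw [Function.iterate_succ_apply']
      have hL : (fockLambda j) ((fockLambda j)^[k] (fockDelta n)) v
          = omegaM M ^ (j * (clockLabel (sigv v) : ℤ)) * ((fockLambda j)^[k] (fockDelta n)) (sigv v) := rfl
      rw [hL, ih]
      by_cases h : v = modeShift^[k + 1] n
      · have hs : sigv v = modeShift^[k] n := by
          rw [h, Function.iterate_succ_apply', sigv_modeShift]
        rw [hs, if_pos rfl, if_pos h]
        rw [omegaM_zpow, mul_one, mul_one, ← ew_add]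
        congr 1
        have : Sg n (k + 1) = Sg n k + (clockLabel (modeShift^[k] n) : ℤ) := by
          unfold Sg; rw [Finset.sum_range_succ]
        rw [this]; ring
      · have hs : sigv v ≠ modeShift^[k] n := by
          intro hc
          apply h
          rw [← modeShift_sigv v, hc]
          exact (Function.iterate_succ_apply' _ _ _).symm
        rw [if_neg hs, if_neg h]
        ring

lemma orbit_inj_s10 (n : Fin M → ℕ) (d : ℕ)
    (hmin : ∀ k, 0 < k → k < d → modeShift^[k] n ≠ n) :
    ∀ k r, k < d → r < d → modeShift^[k] n = modeShift^[r] n → k = r := by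
  have key : ∀ k r, k ≤ r → r < d → modeShift^[k] n = modeShift^[r] n → k = r := by
    intro k r hkr hrd heq
    have : modeShift^[k] (modeShift^[r - k] n) = modeShift^[k] n := by
      rw [← Function.iterate_add_apply, Nat.add_sub_cancel' hkr, heq]
    have h2 : modeShift^[r - k] n = n :=
      Function.Injective.iterate modeShift_inj k this
    by_contra hne
    exact hmin (r - k) (Nat.sub_pos_of_lt (lt_of_le_of_ne hkr hne))
      (lt_of_le_of_lt (Nat.sub_le r k) hrd) h2
  intro k r hk hr heq
  rcases le_total k r with h | h
  · exact key k r h hr heq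
  · exact (key r k h hk heq.symm).symm

lemma eigvec_eval (j : ℤ) (n : Fin M → ℕ) (d m : ℕ)
    (hmin : ∀ k, 0 < k → k < d → modeShift^[k] n ≠ n)
    (r : ℕ) (hr : r < d) :
    pauliEigvec j n d m (modeShift^[r] n)
      = (1 / Real.sqrt d : ℂ)
        * ew M (-((((M : ℤ) - 1) * j * (totalPhotons n : ℤ) + 2 * (m : ℤ)) * r) + 2 * j * Sg n r) := by
  unfold pauliEigvec
  congr 1
  rw [Finset.sum_eq_single r]
  · rw [lambda_iter_s10, if_pos rfl, mul_one, omegaHalf_zpow, ← ew_add]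
  · intro k hk hkr
    rw [lambda_iter_s10, if_neg, mul_zero, mul_zero]
    intro hc
    exact hkr (orbit_inj_s10 n d hmin k r (Finset.mem_range.1 hk) hr hc.symm)
  · intro h
    exact absurd (Finset.mem_range.2 hr) h

end FockLemmas2

section Core

lemma sum_range_shift_mod (g : ℕ → ℂ) (d r' : ℕ) (hd : 0 < d) (hr' : r' < d) :
    ∑ v ∈ range d, g ((r' + v) % d) = ∑ r ∈ range d, g r := by
  refine Finset.sum_nbij' (fun v => (r' + v) % d) (fun r => (r + (d - r')) % d)
    (fun a ha => Finset.mem_range.2 (Nat.mod_lt _ hd))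
    (fun a ha => Finset.mem_range.2 (Nat.mod_lt _ hd)) ?_ ?_ (fun a ha => rfl)
  · intro v hv
    have hv' := Finset.mem_range.1 hv
    show ((r' + v) % d + (d - r')) % d = v
    rw [Nat.mod_add_mod]
    have h : r' + v + (d - r') = v + d := by omega
    rw [h, Nat.add_mod_right, Nat.mod_eq_of_lt hv']
  · intro r hr
    have hr'' := Finset.mem_range.1 hr
    show (r' + (r + (d - r')) % d) % d = r
    rw [add_comm r' _, Nat.mod_add_mod]
    have h : r + (d - r') + r' = r + d := by omega
    rw [h, Nat.add_mod_right, Nat.mod_eq_of_lt hr'']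

lemma gauss_core (M d e : ℕ) (hM : M ≠ 0) (hMde : (M : ℤ) = (d : ℤ) * e) (hd : 0 < d)
    (he : 0 < e) (t Q0 μd a b T twoμ : ℤ) (hT : T = e * Q0)
    (hmu : twoμ = 2 * e * μd + Q0 * d * (e * e - e)) :
    (starRingEnd ℂ)
        (∑ r ∈ range d, ew M (t * T * r * ((M : ℤ) - r) + 2 * (e * a - e * b) * r - t * twoμ * r))
      * (∑ r ∈ range d, ew M (t * T * r * ((M : ℤ) - r) + 2 * (e * a - e * b) * r - t * twoμ * r))
      = ∑ v ∈ range d,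
          (if (d : ℤ) ∣ t * Q0 * v then
            (d : ℂ) * ew M (t * T * (M : ℤ) * v - t * T * v ^ 2 - t * twoμ * v
              + 2 * (e * a - e * b) * v) else 0) := by
  set P : ℕ → ℤ := fun r =>
    t * T * r * ((M : ℤ) - r) + 2 * (e * a - e * b) * r - t * twoμ * r with hP
  set D : ℕ → ℤ := fun v =>
    t * T * (M : ℤ) * v - t * T * (v : ℤ) ^ 2 - t * twoμ * v + 2 * (e * a - e * b) * v with hD
  have key : ∀ r' ∈ range d, ∀ v ∈ range d,
      ew M (-(P r')) * ew M (P ((r' + v) % d))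
        = ew M (D v) * ew M ((-(2 * t * T * v)) * r') := by
    intro r' hr' v hv
    have hr'd := Finset.mem_range.1 hr'
    have hvd := Finset.mem_range.1 hv
    rw [← ew_add, ← ew_add]
    by_cases hlt : r' + v < d
    · rw [Nat.mod_eq_of_lt hlt]
      congr 1
      simp only [hP, hD]
      push_cast
      ring
    · push_neg at hlt
      have hmod : (r' + v) % d = r' + v - d := by
        rw [Nat.mod_eq_sub_mod hlt, Nat.mod_eq_of_lt (by omega)]
      rw [hmod]
      refine ew_congr M ?_ hM
      refine Int.ModEq.symm (Int.modEq_iff_dvd.mpr ?_)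
      have hcast : ((r' + v - d : ℕ) : ℤ) = (r' : ℤ) + v - d := by
        push_cast [Nat.cast_sub (by omega : d ≤ r' + v)]
        ring
      refine ⟨b - a + t * μd + t * Q0 * ((v : ℤ) + (r' : ℤ) - d), ?_⟩
      simp only [hP, hD]
      rw [hcast, hT, hmu, hMde]
      push_cast
      ring
  rw [map_sum]
  simp_rw [ew_conj]
  rw [Finset.sum_mul_sum]
  have step2 : ∀ r' ∈ range d,
      ∑ r ∈ range d, ew M (-(P r')) * ew M (P r)
        = ∑ v ∈ range d, ew M (D v) * ew M ((-(2 * t * T * v)) * r') := by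
    intro r' hr'
    rw [← sum_range_shift_mod (fun r => ew M (-(P r')) * ew M (P r)) d r' hd
      (Finset.mem_range.1 hr')]
    exact Finset.sum_congr rfl (fun v hv => key r' hr' v hv)
  rw [Finset.sum_congr rfl step2, Finset.sum_comm]
  refine Finset.sum_congr rfl (fun v hv => ?_)
  rw [← Finset.mul_sum, ew_geom M hM d (-(2 * t * T * v)) ⟨-(t * Q0 * v), by rw [hT, hMde]; ring⟩]
  have hcond : (2 * (M : ℤ)) ∣ -(2 * t * T * v) ↔ (d : ℤ) ∣ t * Q0 * v := by
    have h1 : 2 * (M : ℤ) = (2 * e) * d := by rw [hMde]; ring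
    have h2 : -(2 * t * T * v) = (2 * (e : ℤ)) * (-(t * Q0 * v)) := by rw [hT]; ring
    rw [h1, h2, mul_dvd_mul_iff_left (by positivity : (2 * (e : ℤ)) ≠ 0), dvd_neg]
  rw [if_congr hcond rfl rfl]
  split_ifs with h
  · rw [mul_comm]
  · rw [mul_zero]

end Core

open Fin.NatCast Fin.CommRing

section Decomp

variable {M : ℕ} [NeZero M]

lemma modeShift_iter_apply (x : Fin M → ℕ) (k : ℕ) (m : Fin M) :
    (modeShift^[k] x) m = x (m - (k : Fin M)) := by
  induction k generalizing m with
  | zero => simp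
  | succ k ih =>
      rw [Function.iterate_succ_apply']
      show (modeShift^[k] x) (m - 1) = _
      rw [ih]
      congr 1
      push_cast
      ring

lemma sum_grid {β : Type*} [AddCommMonoid β] (g : ℕ → β) (d e : ℕ) :
    ∑ r ∈ range (d * e), g r = ∑ c ∈ range e, ∑ i ∈ range d, g (c * d + i) := by
  induction e with
  | zero => simp
  | succ e ih =>
      rw [Nat.mul_succ, Finset.sum_range_add, ih, Finset.sum_range_succ]
      congr 1
      exact Finset.sum_congr rfl fun i _ => by rw [mul_comm d e]

variable (n : Fin M → ℕ) (d : ℕ)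

lemma per_add (hfix : modeShift^[d] n = n) (c : ℕ) (x : Fin M) :
    n (x + ((c * d : ℕ) : Fin M)) = n x := by
  have hper : ∀ y : Fin M, n (y - (d : Fin M)) = n y := by
    intro y
    conv_rhs => rw [← hfix]
    rw [modeShift_iter_apply]
  induction c generalizing x with
  | zero => simp
  | succ c ih =>
      have hcast : (((c + 1) * d : ℕ) : Fin M) = ((c * d : ℕ) : Fin M) + (d : Fin M) := by
        push_cast; ring
      rw [hcast, ← add_assoc]
      have := hper (x + ((c * d : ℕ) : Fin M) + (d : Fin M))
      rw [add_sub_cancel_right] at this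
      rw [← this, ih]

lemma fin_sum_eq (g : ℕ → ℕ → ℕ) :
    ∑ m : Fin M, g (m : ℕ) (n m) = ∑ r ∈ range M, g r (n (r : Fin M)) := by
  rw [← Fin.sum_univ_eq_sum_range (fun r => g r (n (r : Fin M))) M]
  exact Finset.sum_congr rfl fun i _ => by rw [Fin.cast_val_eq_self]

end Decomp

section Decomp2

lemma totalPhotons_decomp {d e : ℕ} [NeZero (d * e)] (n : Fin (d * e) → ℕ)
    (hfix : modeShift^[d] n = n) :
    totalPhotons n = e * ∑ i ∈ range d, n (i : Fin (d * e)) := by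
  unfold totalPhotons
  rw [fin_sum_eq n (fun _ v => v), sum_grid]
  rw [Finset.sum_congr rfl (fun c hc => Finset.sum_congr rfl (fun i hi =>
    (by rw [Nat.cast_add, add_comm, per_add n d hfix] :
      n ((c * d + i : ℕ) : Fin (d * e)) = n ((i : ℕ) : Fin (d * e)))))]
  rw [Finset.sum_const, Finset.card_range, smul_eq_mul]

lemma clockLabel_decomp {d e : ℕ} [NeZero (d * e)] (n : Fin (d * e) → ℕ)
    (hfix : modeShift^[d] n = n) :
    2 * clockLabel n
      = 2 * e * (∑ i ∈ range d, i * n (i : Fin (d * e)))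
        + (∑ i ∈ range d, n (i : Fin (d * e))) * d * (e * e - e) := by
  unfold clockLabel
  rw [fin_sum_eq n (fun r v => r * v), sum_grid]
  set Q0 := ∑ i ∈ range d, n (i : Fin (d * e)) with hQ0
  set μd := ∑ i ∈ range d, i * n (i : Fin (d * e)) with hμd
  have h1 : ∀ c ∈ range e, ∑ i ∈ range d, (c * d + i) * n ((c * d + i : ℕ) : Fin (d * e))
      = c * (d * Q0) + μd := by
    intro c _
    have hterm : ∀ i ∈ range d, (c * d + i) * n ((c * d + i : ℕ) : Fin (d * e))
        = c * d * n ((i : ℕ) : Fin (d * e)) + i * n ((i : ℕ) : Fin (d * e)) := by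
      intro i _
      have hc : ((c * d + i : ℕ) : Fin (d * e)) = ((i : ℕ) : Fin (d * e)) + ((c * d : ℕ) : Fin (d * e)) := by
        push_cast; ring
      rw [hc, per_add n d hfix, add_mul]
    rw [Finset.sum_congr rfl hterm, Finset.sum_add_distrib, ← Finset.mul_sum, hQ0, hμd, mul_assoc]
  rw [Finset.sum_congr rfl h1, Finset.sum_add_distrib, ← Finset.sum_mul, Finset.sum_const,
    Finset.card_range, smul_eq_mul]
  have hgauss : (∑ c ∈ range e, c) * 2 = e * (e - 1) := Finset.sum_range_id_mul_two e
  have he1 : e * (e - 1) = e * e - e := by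
    cases e with
    | zero => simp
    | succ k =>
        have h : (k + 1) * (k + 1) = (k + 1) * k + (k + 1) := by ring
        simp [Nat.succ_sub_one, h]
  rw [← he1, ← hgauss]
  ring

end Decomp2

section Overlap

lemma overlap_eq (M : ℕ) [NeZero M] (j l : ℤ) (n : Fin M → ℕ) (d : ℕ)
    (hmin : ∀ k, 0 < k → k < d → modeShift^[k] n ≠ n) (e a b : ℕ) :
    orbitInner n d (pauliEigvec l n d (e * a)) (pauliEigvec j n d (e * b))
      = (1 / (d : ℂ)) * ∑ r ∈ range d,
          ew M ((l - j) * (totalPhotons n : ℤ) * r * ((M : ℤ) - r)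
            + 2 * ((e : ℤ) * a - (e : ℤ) * b) * r
            - (l - j) * (2 * (clockLabel n : ℤ)) * r) := by
  have hM0 : M ≠ 0 := NeZero.ne M
  unfold orbitInner
  rw [Finset.mul_sum]
  refine Finset.sum_congr rfl fun r hr => ?_
  have hrd := Finset.mem_range.1 hr
  rw [eigvec_eval l n d (e * a) hmin r hrd, eigvec_eval j n d (e * b) hmin r hrd,
    map_mul, ew_conj]
  have hcoef : (starRingEnd ℂ) ((1 : ℂ) / (Real.sqrt d : ℝ)) = (1 : ℂ) / (Real.sqrt d : ℝ) := by
    rw [map_div₀, map_one, Complex.conj_ofReal]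
  rw [hcoef]
  have hdd : ((1 : ℂ) / (Real.sqrt d : ℝ)) * ((1 : ℂ) / (Real.sqrt d : ℝ)) = 1 / (d : ℂ) := by
    rw [div_mul_div_comm, one_mul, ← Complex.ofReal_mul,
      Real.mul_self_sqrt (Nat.cast_nonneg d)]
    norm_num
  rw [show ((1 : ℂ) / (Real.sqrt d : ℝ))
        * ew M (-(-((((M : ℤ) - 1) * l * (totalPhotons n : ℤ) + 2 * ((e * a : ℕ) : ℤ)) * r)
            + 2 * l * Sg n r))
        * (((1 : ℂ) / (Real.sqrt d : ℝ))
          * ew M (-((((M : ℤ) - 1) * j * (totalPhotons n : ℤ) + 2 * ((e * b : ℕ) : ℤ)) * r)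
            + 2 * j * Sg n r))
      = (((1 : ℂ) / (Real.sqrt d : ℝ)) * ((1 : ℂ) / (Real.sqrt d : ℝ)))
        * (ew M (-(-((((M : ℤ) - 1) * l * (totalPhotons n : ℤ) + 2 * ((e * a : ℕ) : ℤ)) * r)
            + 2 * l * Sg n r))
          * ew M (-((((M : ℤ) - 1) * j * (totalPhotons n : ℤ) + 2 * ((e * b : ℕ) : ℤ)) * r)
            + 2 * j * Sg n r)) from by ring]
  rw [hdd, ← ew_add]
  congr 1
  refine ew_congr M ?_ hM0
  have hs2 := (Sg_mod n r).mul_left (j - l)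
  have heq1 : -(-((((M : ℤ) - 1) * l * (totalPhotons n : ℤ) + 2 * ((e * a : ℕ) : ℤ)) * r)
        + 2 * l * Sg n r)
      + (-((((M : ℤ) - 1) * j * (totalPhotons n : ℤ) + 2 * ((e * b : ℕ) : ℤ)) * r)
        + 2 * j * Sg n r)
      = ((((M : ℤ) - 1) * l * (totalPhotons n : ℤ) + 2 * ((e * a : ℕ) : ℤ)) * r
          - ((((M : ℤ) - 1) * j * (totalPhotons n : ℤ) + 2 * ((e * b : ℕ) : ℤ)) * r))
        + (j - l) * (2 * Sg n r) := by ring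
  rw [heq1]
  have heq2 : ((((M : ℤ) - 1) * l * (totalPhotons n : ℤ) + 2 * ((e * a : ℕ) : ℤ)) * r
          - ((((M : ℤ) - 1) * j * (totalPhotons n : ℤ) + 2 * ((e * b : ℕ) : ℤ)) * r))
        + (j - l) * (2 * (r : ℤ) * (clockLabel n : ℤ)
            + (totalPhotons n : ℤ) * ((r : ℤ) * ((r : ℤ) - 1)))
      = (l - j) * (totalPhotons n : ℤ) * r * ((M : ℤ) - r)
        + 2 * ((e : ℤ) * a - (e : ℤ) * b) * r
        - (l - j) * (2 * (clockLabel n : ℤ)) * r := by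
    push_cast
    ring
  rw [← heq2]
  exact hs2.add_left _

end Overlap

section MainHelpers

lemma decomp_T (M d e : ℕ) [NeZero M] (hMde : M = d * e) (n : Fin M → ℕ)
    (hfix : modeShift^[d] n = n) :
    totalPhotons n = e * ∑ i ∈ range d, n (i : Fin M) := by
  subst hMde
  exact totalPhotons_decomp n hfix

lemma decomp_mu (M d e : ℕ) [NeZero M] (hMde : M = d * e) (n : Fin M → ℕ)
    (hfix : modeShift^[d] n = n) :
    2 * clockLabel n
      = 2 * e * (∑ i ∈ range d, i * n (i : Fin M))
        + (∑ i ∈ range d, n (i : Fin M)) * d * (e * e - e) := by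
  subst hMde
  exact clockLabel_decomp n hfix

lemma abs_iff_normSq (d : ℕ) (hd : 0 < d) (z : ℂ) :
    ‖(1 / (d : ℂ)) * z‖ = 1 / Real.sqrt d
      ↔ (starRingEnd ℂ) z * z = (d : ℂ) := by
  have hdR : (0 : ℝ) < d := by exact_mod_cast hd
  have hs : (0 : ℝ) < Real.sqrt d := Real.sqrt_pos.2 hdR
  have hss : Real.sqrt d * Real.sqrt d = (d : ℝ) := Real.mul_self_sqrt hdR.le
  have hconj : (starRingEnd ℂ) z * z = ((Complex.normSq z : ℝ) : ℂ) :=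
    Complex.normSq_eq_conj_mul_self.symm
  rw [norm_mul, norm_div, norm_one, Complex.norm_natCast, hconj]
  constructor
  · intro h
    have h3 : ‖z‖ * Real.sqrt d = (d : ℝ) := by
      field_simp at h
      nlinarith [h, hss]
    have habs : ‖z‖ = Real.sqrt d := by
      have : ‖z‖ * Real.sqrt d = Real.sqrt d * Real.sqrt d := by rw [h3, hss]
      exact mul_right_cancel₀ (ne_of_gt hs) this
    have hn : Complex.normSq z = (d : ℝ) := by rw [← Complex.sq_norm, habs, sq, hss]
    rw [hn]
    norm_num
  · intro h
    have hn : Complex.normSq z = (d : ℝ) := by exact_mod_cast h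
    have habs : ‖z‖ = Real.sqrt d := by rw [Complex.norm_def, hn]
    rw [habs]
    rw [← hss]
    field_simp
    rw [Real.sqrt_sq hs.le]

end MainHelpers

/-- the eigenbases of `Λ_j` and `Λ_l` restricted to the Pauli subspace
`span(E_n)` (with orbit cardinality `d`) are mutually unbiased — all pairwise overlaps
have modulus `1/√d` — if and only if `gcd((l−j)·|n|·d/M, d) = 1`. -/
theorem pauli_bases_mub_iff (M : ℕ) [NeZero M] (j l : ℤ) (n : Fin M → ℕ) (d : ℕ)
    (hd : 0 < d) (hfix : modeShift^[d] n = n)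
    (hmin : ∀ k, 0 < k → k < d → modeShift^[k] n ≠ n) (hdM : d ∣ M) :
    (∀ m m' : ℕ, (M / d) ∣ m → m < M → (M / d) ∣ m' → m' < M →
        ‖orbitInner n d (pauliEigvec l n d m) (pauliEigvec j n d m')‖
          = 1 / Real.sqrt d) ↔
      Int.gcd ((l - j) * ((totalPhotons n * d / M : ℕ) : ℤ)) (d : ℤ) = 1 := by
  classical
  have hM0 : M ≠ 0 := NeZero.ne M
  have hMpos : 0 < M := Nat.pos_of_ne_zero hM0
  set e := M / d with he_def
  have hMde : M = d * e := (Nat.mul_div_cancel' hdM).symm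
  have he : 0 < e := by
    rcases Nat.eq_zero_or_pos e with h0 | h
    · exact absurd (by rw [hMde, h0, mul_zero]) hM0
    · exact h
  have hMdeZ : (M : ℤ) = (d : ℤ) * e := by exact_mod_cast hMde
  set Q0 := ∑ i ∈ range d, n (i : Fin M) with hQ0def
  set μd := ∑ i ∈ range d, i * n (i : Fin M) with hμddef
  have hT : totalPhotons n = e * Q0 := decomp_T M d e hMde n hfix
  have hmu2 : 2 * clockLabel n = 2 * e * μd + Q0 * d * (e * e - e) := decomp_mu M d e hMde n hfix
  have hq : totalPhotons n * d / M = Q0 := by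
    rw [hT, hMde, show e * Q0 * d = d * e * Q0 from by ring]
    exact Nat.mul_div_cancel_left Q0 (by positivity)
  rw [hq]
  have hTZ : (totalPhotons n : ℤ) = (e : ℤ) * (Q0 : ℤ) := by exact_mod_cast hT
  have hmuZ : 2 * (clockLabel n : ℤ)
      = 2 * (e : ℤ) * (μd : ℤ) + (Q0 : ℤ) * (d : ℤ) * ((e : ℤ) * (e : ℤ) - (e : ℤ)) := by
    have hee : e ≤ e * e := Nat.le_mul_of_pos_left e he
    have h' := congrArg (fun x : ℕ => (x : ℤ)) hmu2
    push_cast [Nat.cast_sub hee] at h'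
    exact_mod_cast h'
  have master : ∀ a b : ℕ,
      (starRingEnd ℂ)
          (∑ r ∈ range d,
            ew M ((l - j) * (totalPhotons n : ℤ) * r * ((M : ℤ) - r)
              + 2 * ((e : ℤ) * (a : ℤ) - (e : ℤ) * (b : ℤ)) * r
              - (l - j) * (2 * (clockLabel n : ℤ)) * r))
        * (∑ r ∈ range d,
            ew M ((l - j) * (totalPhotons n : ℤ) * r * ((M : ℤ) - r)
              + 2 * ((e : ℤ) * (a : ℤ) - (e : ℤ) * (b : ℤ)) * r
              - (l - j) * (2 * (clockLabel n : ℤ)) * r))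
        = ∑ v ∈ range d,
            (if (d : ℤ) ∣ (l - j) * (Q0 : ℤ) * v then
              (d : ℂ) * ew M ((l - j) * (totalPhotons n : ℤ) * (M : ℤ) * v
                - (l - j) * (totalPhotons n : ℤ) * (v : ℤ) ^ 2
                - (l - j) * (2 * (clockLabel n : ℤ)) * v
                + 2 * ((e : ℤ) * (a : ℤ) - (e : ℤ) * (b : ℤ)) * v) else 0) :=
    fun a b => gauss_core M d e hM0 hMdeZ hd he (l - j) (Q0 : ℤ) (μd : ℤ) (a : ℤ) (b : ℤ)
      (totalPhotons n : ℤ) (2 * (clockLabel n : ℤ)) hTZ hmuZ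
  constructor
  · -- mutually unbiased → gcd = 1
    intro hmub
    by_contra hg
    set g := Int.gcd ((l - j) * (Q0 : ℤ)) (d : ℤ) with hgdef
    have hgd : (g : ℤ) ∣ (d : ℤ) := Int.gcd_dvd_right _ _
    have hgdn : g ∣ d := by exact_mod_cast hgd
    have hgpos : 0 < g := by
      rcases Nat.eq_zero_or_pos g with h0 | h
      · exfalso
        have h1 := Int.gcd_eq_zero_iff.1 h0
        have hd0 : d = 0 := by exact_mod_cast h1.2
        omega
      · exact h
    have hg1 : 1 < g := by
      rcases Nat.lt_or_ge 1 g with h | h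
      · exact h
      · exact absurd (le_antisymm h hgpos) hg
    set v₀ := d / g with hv0def
    have hv0pos : 0 < v₀ := Nat.div_pos (Nat.le_of_dvd hd hgdn) hgpos
    have hv0lt : v₀ < d := Nat.div_lt_self hd hg1
    have hdg : (d : ℤ) = (g : ℤ) * (v₀ : ℤ) := by exact_mod_cast (Nat.mul_div_cancel' hgdn).symm
    have hv0dvd : (d : ℤ) ∣ (l - j) * (Q0 : ℤ) * (v₀ : ℤ) := by
      obtain ⟨c, hc⟩ := (Int.gcd_dvd_left _ _ : ((Int.gcd ((l - j) * (Q0 : ℤ)) (d : ℤ) : ℤ)) ∣ (l - j) * (Q0 : ℤ))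
      have hc' : (l - j) * (Q0 : ℤ) = (g : ℤ) * c := hc
      exact ⟨c, by rw [hc', hdg]; ring⟩
    have hdC : (d : ℂ) ≠ 0 := by
      simpa using Nat.pos_iff_ne_zero.1 hd
    -- all the unit sums
    have hF : ∀ w ∈ range d,
        ∑ v ∈ range d,
          (if (d : ℤ) ∣ (l - j) * (Q0 : ℤ) * v then
            ew M ((l - j) * (totalPhotons n : ℤ) * (M : ℤ) * v
              - (l - j) * (totalPhotons n : ℤ) * (v : ℤ) ^ 2
              - (l - j) * (2 * (clockLabel n : ℤ)) * v
              + 2 * ((e : ℤ) * (w : ℤ) - (e : ℤ) * ((0 : ℕ) : ℤ)) * v) else 0) = 1 := by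
      intro w hw
      have hwd := Finset.mem_range.1 hw
      have hmlt : e * w < M := by
        rw [hMde, mul_comm d e]
        exact (mul_lt_mul_iff_right₀ he).2 hwd
      have h1 := hmub (e * w) 0 ⟨w, rfl⟩ hmlt (dvd_zero e) hMpos
      rw [show (0 : ℕ) = e * 0 from (mul_zero e).symm] at h1
      rw [overlap_eq M j l n d hmin e w 0, abs_iff_normSq d hd, master w 0] at h1
      have hfac : ∑ v ∈ range d,
          (if (d : ℤ) ∣ (l - j) * (Q0 : ℤ) * v then
            (d : ℂ) * ew M ((l - j) * (totalPhotons n : ℤ) * (M : ℤ) * v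
              - (l - j) * (totalPhotons n : ℤ) * (v : ℤ) ^ 2
              - (l - j) * (2 * (clockLabel n : ℤ)) * v
              + 2 * ((e : ℤ) * (w : ℤ) - (e : ℤ) * ((0 : ℕ) : ℤ)) * v) else 0)
          = (d : ℂ) * ∑ v ∈ range d,
            (if (d : ℤ) ∣ (l - j) * (Q0 : ℤ) * v then
              ew M ((l - j) * (totalPhotons n : ℤ) * (M : ℤ) * v
                - (l - j) * (totalPhotons n : ℤ) * (v : ℤ) ^ 2
                - (l - j) * (2 * (clockLabel n : ℤ)) * v
                + 2 * ((e : ℤ) * (w : ℤ) - (e : ℤ) * ((0 : ℕ) : ℤ)) * v) else 0) := by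
        rw [Finset.mul_sum]
        exact Finset.sum_congr rfl fun v _ => by rw [mul_ite, mul_zero]
      rw [hfac] at h1
      exact mul_left_cancel₀ hdC (h1.trans (mul_one (d : ℂ)).symm)
    -- geometric sum of pure phases vanishes
    have hL1 : ∑ w ∈ range d, ew M ((-(2 * (e : ℤ) * (v₀ : ℤ))) * (w : ℤ)) = 0 := by
      rw [ew_geom M hM0 d _ ⟨-(v₀ : ℤ), by rw [hMdeZ]; ring⟩, if_neg]
      intro hdvd
      have h1 : (0 : ℤ) < 2 * (e : ℤ) * (v₀ : ℤ) := by positivity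
      have h2 := Int.le_of_dvd h1 (Int.dvd_neg.1 hdvd)
      have hvz : (v₀ : ℤ) < (d : ℤ) := by exact_mod_cast hv0lt
      have hez : (0 : ℤ) < (e : ℤ) := by exact_mod_cast he
      nlinarith
    -- weighted sum evaluates to d * (unit phase)
    have hL2 : ∑ w ∈ range d, ew M ((-(2 * (e : ℤ) * (v₀ : ℤ))) * (w : ℤ))
          * (∑ v ∈ range d,
            (if (d : ℤ) ∣ (l - j) * (Q0 : ℤ) * v then
              ew M ((l - j) * (totalPhotons n : ℤ) * (M : ℤ) * v
                - (l - j) * (totalPhotons n : ℤ) * (v : ℤ) ^ 2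
                - (l - j) * (2 * (clockLabel n : ℤ)) * v
                + 2 * ((e : ℤ) * (w : ℤ) - (e : ℤ) * ((0 : ℕ) : ℤ)) * v) else 0))
        = (d : ℂ) * ew M ((l - j) * (totalPhotons n : ℤ) * (M : ℤ) * (v₀ : ℤ)
            - (l - j) * (totalPhotons n : ℤ) * (v₀ : ℤ) ^ 2
            - (l - j) * (2 * (clockLabel n : ℤ)) * (v₀ : ℤ)) := by
      have step1 : ∀ w ∈ range d, ew M ((-(2 * (e : ℤ) * (v₀ : ℤ))) * (w : ℤ))
          * (∑ v ∈ range d,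
            (if (d : ℤ) ∣ (l - j) * (Q0 : ℤ) * v then
              ew M ((l - j) * (totalPhotons n : ℤ) * (M : ℤ) * v
                - (l - j) * (totalPhotons n : ℤ) * (v : ℤ) ^ 2
                - (l - j) * (2 * (clockLabel n : ℤ)) * v
                + 2 * ((e : ℤ) * (w : ℤ) - (e : ℤ) * ((0 : ℕ) : ℤ)) * v) else 0))
          = ∑ v ∈ range d,
            (if (d : ℤ) ∣ (l - j) * (Q0 : ℤ) * v then
              ew M ((l - j) * (totalPhotons n : ℤ) * (M : ℤ) * (v : ℤ)
                - (l - j) * (totalPhotons n : ℤ) * (v : ℤ) ^ 2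
                - (l - j) * (2 * (clockLabel n : ℤ)) * (v : ℤ))
                * ew M ((2 * (e : ℤ) * ((v : ℤ) - (v₀ : ℤ))) * (w : ℤ)) else 0) := by
        intro w hw
        rw [Finset.mul_sum]
        refine Finset.sum_congr rfl fun v hv => ?_
        rw [mul_ite, mul_zero]
        refine if_congr Iff.rfl ?_ rfl
        rw [← ew_add, ← ew_add]
        congr 1
        push_cast
        ring
      rw [Finset.sum_congr rfl step1, Finset.sum_comm]
      have step2 : ∀ v ∈ range d,
          ∑ w ∈ range d,
            (if (d : ℤ) ∣ (l - j) * (Q0 : ℤ) * v then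
              ew M ((l - j) * (totalPhotons n : ℤ) * (M : ℤ) * (v : ℤ)
                - (l - j) * (totalPhotons n : ℤ) * (v : ℤ) ^ 2
                - (l - j) * (2 * (clockLabel n : ℤ)) * (v : ℤ))
                * ew M ((2 * (e : ℤ) * ((v : ℤ) - (v₀ : ℤ))) * (w : ℤ)) else 0)
          = (if (d : ℤ) ∣ (l - j) * (Q0 : ℤ) * v then
              ew M ((l - j) * (totalPhotons n : ℤ) * (M : ℤ) * (v : ℤ)
                - (l - j) * (totalPhotons n : ℤ) * (v : ℤ) ^ 2
                - (l - j) * (2 * (clockLabel n : ℤ)) * (v : ℤ))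
                * ∑ w ∈ range d, ew M ((2 * (e : ℤ) * ((v : ℤ) - (v₀ : ℤ))) * (w : ℤ)) else 0) := by
        intro v hv
        by_cases hc : (d : ℤ) ∣ (l - j) * (Q0 : ℤ) * v
        · simp only [if_pos hc, Finset.mul_sum]
        · simp only [if_neg hc, Finset.sum_const_zero]
      rw [Finset.sum_congr rfl step2]
      rw [Finset.sum_eq_single v₀]
      · rw [if_pos hv0dvd,
          ew_geom M hM0 d _ ⟨(v₀ : ℤ) - (v₀ : ℤ), by rw [hMdeZ]; ring⟩,
          if_pos (by simp)]
        ring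
      · intro v hv hne
        by_cases hc : (d : ℤ) ∣ (l - j) * (Q0 : ℤ) * v
        · rw [if_pos hc,
            ew_geom M hM0 d _ ⟨(v : ℤ) - (v₀ : ℤ), by rw [hMdeZ]; ring⟩,
            if_neg, mul_zero]
          intro hdd
          have h2 : ((2 : ℤ) * (e : ℤ)) * (d : ℤ) ∣ ((2 : ℤ) * (e : ℤ)) * ((v : ℤ) - (v₀ : ℤ)) := by
            have hrw1 : ((2 : ℤ) * (e : ℤ)) * (d : ℤ) = 2 * (M : ℤ) := by rw [hMdeZ]; ring
            have hrw2 : ((2 : ℤ) * (e : ℤ)) * ((v : ℤ) - (v₀ : ℤ))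
                = 2 * (e : ℤ) * ((v : ℤ) - (v₀ : ℤ)) := by ring
            rw [hrw1, hrw2]
            exact hdd
          have hdvdv : (d : ℤ) ∣ ((v : ℤ) - (v₀ : ℤ)) :=
            (mul_dvd_mul_iff_left (by positivity : ((2 : ℤ) * (e : ℤ)) ≠ 0)).1 h2
          have habs : |(v : ℤ) - (v₀ : ℤ)| < (d : ℤ) := by
            have h1 : (v : ℤ) < d := by exact_mod_cast Finset.mem_range.1 hv
            have h2' : (v₀ : ℤ) < d := by exact_mod_cast hv0lt
            have h3 : (0 : ℤ) ≤ (v : ℤ) := by positivity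
            have h4 : (0 : ℤ) ≤ (v₀ : ℤ) := by positivity
            rw [abs_lt]
            constructor <;> linarith
          have h0 := Int.eq_zero_of_abs_lt_dvd hdvdv habs
          have : (v : ℤ) = (v₀ : ℤ) := by linarith
          exact absurd (by exact_mod_cast this) hne
        · rw [if_neg hc]
      · intro habs
        exact absurd (Finset.mem_range.2 hv0lt) habs
    have hL3 : ∑ w ∈ range d, ew M ((-(2 * (e : ℤ) * (v₀ : ℤ))) * (w : ℤ))
          * (∑ v ∈ range d,
            (if (d : ℤ) ∣ (l - j) * (Q0 : ℤ) * v then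
              ew M ((l - j) * (totalPhotons n : ℤ) * (M : ℤ) * v
                - (l - j) * (totalPhotons n : ℤ) * (v : ℤ) ^ 2
                - (l - j) * (2 * (clockLabel n : ℤ)) * v
                + 2 * ((e : ℤ) * (w : ℤ) - (e : ℤ) * ((0 : ℕ) : ℤ)) * v) else 0)) = 0 := by
      rw [Finset.sum_congr rfl (fun w hw => by rw [hF w hw, mul_one])]
      exact hL1
    rw [hL3] at hL2
    exact absurd hL2.symm (mul_ne_zero hdC (ew_ne_zero M _))
  · -- gcd = 1 → mutually unbiased
    intro hgcd m m' hm hmlt hm' hm'lt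
    obtain ⟨a, rfl⟩ := hm
    obtain ⟨b, rfl⟩ := hm'
    rw [overlap_eq M j l n d hmin e a b, abs_iff_normSq d hd, master a b]
    have hterm : ∀ v ∈ range d, v ≠ 0 →
        (if (d : ℤ) ∣ (l - j) * (Q0 : ℤ) * v then
          (d : ℂ) * ew M ((l - j) * (totalPhotons n : ℤ) * (M : ℤ) * v
            - (l - j) * (totalPhotons n : ℤ) * (v : ℤ) ^ 2
            - (l - j) * (2 * (clockLabel n : ℤ)) * v
            + 2 * ((e : ℤ) * (a : ℤ) - (e : ℤ) * (b : ℤ)) * v) else 0) = 0 := by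
      intro v hv hv0
      rw [if_neg]
      intro hdvd
      have hco : IsCoprime ((l - j) * (Q0 : ℤ)) (d : ℤ) := Int.isCoprime_iff_gcd_eq_one.2 hgcd
      have hdv : (d : ℤ) ∣ (v : ℤ) := hco.symm.dvd_of_dvd_mul_left hdvd
      have hvpos : (0 : ℤ) < (v : ℤ) := by exact_mod_cast Nat.pos_of_ne_zero hv0
      have hle := Int.le_of_dvd hvpos hdv
      have hlt : (v : ℤ) < (d : ℤ) := by exact_mod_cast Finset.mem_range.1 hv
      linarith
    rw [Finset.sum_eq_single 0 hterm (fun h0 => absurd (Finset.mem_range.2 hd) h0)]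
    simp [ew_zero]
end
end
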